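/- arXiv:2503.05688 — 2 statements merged into one kernel-verified Lean document; each statement's English description precedes it below -/
import Mathlib

section
/- Let d ≥ 1 and let σ₁, …, σ_k be permutations of {1,…,d} such that σ_k ∘ σ_{k−1} ∘ ⋯ ∘ σ₁ = id and such that the subgroup of S_d generated by σ₁, …, σ_k acts transitively on {1,…,d}. For a permutation σ let c(σ) denote the number of orbits of σ on {1,…,d} (i.e. the number of disjoint cycles of σ, counting fixed points). Then there exists a unique nonnegative integer g such that Σ_{i=1}^{k} (d − c(σᵢ)) − 2g = 2d − 2; equivalently, Σ_{i=1}^{k} (d − c(σᵢ)) ≥ 2d − 2 and Σ_{i=1}^{k} (d − c(σᵢ)) is even. -/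
open Equiv Equiv.Perm

set_option linter.unusedSectionVars false
namespace RH

variable {α : Type*} [DecidableEq α] [Fintype α]

/-- base relation attached to a set of permutations -/
def brel (S : Set (Perm α)) : α → α → Prop := fun x y => ∃ g ∈ S, g x = y

/-- the generated equivalence relation -/
def grel (S : Set (Perm α)) : α → α → Prop := Relation.EqvGen (brel S)

/-- number of orbits -/
noncomputable def qc (S : Set (Perm α)) : ℕ := Nat.card (Quot (brel S))

theorem grel_refl (S : Set (Perm α)) (x : α) : grel S x x := Relation.EqvGen.refl x

theorem grel_symm {S : Set (Perm α)} {x y : α} (h : grel S x y) : grel S y x :=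
  Relation.EqvGen.symm x y h

theorem grel_trans {S : Set (Perm α)} {x y z : α} (h : grel S x y) (h' : grel S y z) :
    grel S x z := Relation.EqvGen.trans x y z h h'

theorem grel_base {S : Set (Perm α)} {g : Perm α} (hg : g ∈ S) (x : α) : grel S x (g x) :=
  Relation.EqvGen.rel x (g x) ⟨g, hg, rfl⟩

theorem grel_mono {S T : Set (Perm α)} (h : S ⊆ T) {x y : α} (hxy : grel S x y) :
    grel T x y :=
  Relation.EqvGen.mono (by intro a b ⟨g, hg, hgab⟩; exact ⟨g, h hg, hgab⟩) x y hxy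

theorem quot_mk_eq_iff {S : Set (Perm α)} {x y : α} :
    Quot.mk (brel S) x = Quot.mk (brel S) y ↔ grel S x y := Quot.eq

theorem grel_list_prod {S : Set (Perm α)} {l : List (Perm α)} (hl : ∀ g ∈ l, g ∈ S) (x : α) :
    grel S x (l.prod x) := by
  induction l generalizing x with
  | nil => simpa using grel_refl S x
  | cons t l ih =>
      have h1 : grel S x (l.prod x) := ih (fun g hg => hl g (List.mem_cons_of_mem _ hg)) x
      have h2 : grel S (l.prod x) (t (l.prod x)) := grel_base (hl t List.mem_cons_self) _
      simpa [Perm.mul_apply] using grel_trans h1 h2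

theorem grel_inv {S : Set (Perm α)} {g : Perm α} (hg : ∀ x, grel S x (g x)) (x : α) :
    grel S x (g⁻¹ x) := by
  have := hg (g⁻¹ x)
  rw [show g (g⁻¹ x) = x from g.apply_symm_apply x] at this
  exact grel_symm this

/-- monotonicity of orbit count -/
theorem qc_le_of_le {S T : Set (Perm α)} (h : ∀ x y, grel S x y → grel T x y) :
    qc T ≤ qc S := by
  apply Nat.card_le_card_of_surjective
    (f := Quot.lift (fun x => Quot.mk (brel T) x)
      (fun a b hab => quot_mk_eq_iff.2 (h a b (Relation.EqvGen.rel a b hab))))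
  intro q
  obtain ⟨x, rfl⟩ := Quot.exists_rep q
  exact ⟨Quot.mk _ x, rfl⟩

theorem qc_mono {S T : Set (Perm α)} (h : S ⊆ T) : qc T ≤ qc S :=
  qc_le_of_le fun _ _ hxy => grel_mono h hxy



section Test
variable {S : Set (Perm α)} {a b : α}

/-- structure of the equivalence generated by `S` together with one swap -/
theorem grel_insert_swap_cases (hab : a ≠ b) {x y : α}
    (h : grel (S ∪ {Equiv.swap a b}) x y) :
    grel S x y ∨ (grel S x a ∧ grel S b y) ∨ (grel S x b ∧ grel S a y) := by
  induction h with
  | rel u v huv =>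
      obtain ⟨g, hg, rfl⟩ := huv
      rcases hg with hg | hg
      · exact Or.inl (grel_base hg u)
      · rw [Set.mem_singleton_iff] at hg
        subst hg
        rcases eq_or_ne u a with rfl | hua
        · rw [Equiv.swap_apply_left]
          exact Or.inr (Or.inl ⟨grel_refl S u, grel_refl S b⟩)
        · rcases eq_or_ne u b with rfl | hub
          · rw [Equiv.swap_apply_right]
            exact Or.inr (Or.inr ⟨grel_refl S u, grel_refl S a⟩)
          · rw [Equiv.swap_apply_of_ne_of_ne hua hub]
            exact Or.inl (grel_refl S u)
  | refl u => exact Or.inl (grel_refl S u)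
  | symm u v _ ih =>
      rcases ih with h1 | ⟨h1, h2⟩ | ⟨h1, h2⟩
      · exact Or.inl (grel_symm h1)
      · exact Or.inr (Or.inr ⟨grel_symm h2, grel_symm h1⟩)
      · exact Or.inr (Or.inl ⟨grel_symm h2, grel_symm h1⟩)
  | trans u v w _ _ ih1 ih2 =>
      rcases ih1 with h1 | ⟨h1, h2⟩ | ⟨h1, h2⟩ <;>
        rcases ih2 with h3 | ⟨h3, h4⟩ | ⟨h3, h4⟩
      · exact Or.inl (grel_trans h1 h3)
      · exact Or.inr (Or.inl ⟨grel_trans h1 h3, h4⟩)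
      · exact Or.inr (Or.inr ⟨grel_trans h1 h3, h4⟩)
      · exact Or.inr (Or.inl ⟨h1, grel_trans h2 h3⟩)
      · exact Or.inr (Or.inl ⟨h1, h4⟩)
      · exact Or.inl (grel_trans h1 h4)
      · exact Or.inr (Or.inr ⟨h1, grel_trans h2 h3⟩)
      · exact Or.inl (grel_trans h1 h4)
      · exact Or.inr (Or.inr ⟨h1, h4⟩)

theorem nat_card_option (β : Type*) [Finite β] : Nat.card (Option β) = Nat.card β + 1 := by
  have : Fintype β := Fintype.ofFinite β
  simp [Nat.card_eq_fintype_card]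

/-- adding one swap decreases the orbit count by at most one -/
theorem qc_le_qc_insert_swap_add_one (S : Set (Perm α)) {a b : α} (hab : a ≠ b) :
    qc S ≤ qc (S ∪ {Equiv.swap a b}) + 1 := by
  classical
  set T := S ∪ {Equiv.swap a b} with hT
  have hST : S ⊆ T := Set.subset_union_left
  let f : Quot (brel S) → Option (Quot (brel T)) := fun u =>
    if u = Quot.mk _ b then none
    else some (Quot.lift (fun x => Quot.mk (brel T) x)
      (fun u v huv => quot_mk_eq_iff.2 (grel_mono hST (.rel _ _ huv))) u)
  have hinj : Function.Injective f := by
    intro u v huv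
    obtain ⟨x, rfl⟩ := Quot.exists_rep u
    obtain ⟨y, rfl⟩ := Quot.exists_rep v
    by_cases hx : Quot.mk (brel S) x = Quot.mk (brel S) b <;>
      by_cases hy : Quot.mk (brel S) y = Quot.mk (brel S) b
    · rw [hx, hy]
    · simp only [f, if_pos hx, if_neg hy] at huv
      exact absurd huv (by simp)
    · simp only [f, if_neg hx, if_pos hy] at huv
      exact absurd huv (by simp)
    · simp only [f, if_neg hx, if_neg hy, Option.some.injEq] at huv
      have hxy : grel T x y := quot_mk_eq_iff.1 huv
      rcases grel_insert_swap_cases hab hxy with h | ⟨h1, h2⟩ | ⟨h1, h2⟩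
      · exact quot_mk_eq_iff.2 h
      · exact absurd (quot_mk_eq_iff.2 (grel_symm h2)) hy
      · exact absurd (quot_mk_eq_iff.2 h1) hx
  have hfin : Fintype (Quot (brel T)) := Fintype.ofFinite _
  calc qc S ≤ Nat.card (Option (Quot (brel T))) := Nat.card_le_card_of_injective f hinj
    _ = qc T + 1 := nat_card_option _

/-- if the two swapped points are already equivalent, the orbit count is unchanged -/
theorem grel_insert_swap_of_grel {S : Set (Perm α)} {a b : α} (hab : grel S a b)
    {x y : α} (h : grel (S ∪ {Equiv.swap a b}) x y) : grel S x y := by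
  rcases eq_or_ne a b with rfl | hne
  · induction h with
    | rel u v huv =>
        obtain ⟨g, hg | hg, rfl⟩ := huv
        · exact grel_base hg u
        · rw [Set.mem_singleton_iff] at hg
          subst hg
          simpa [Equiv.swap_self] using grel_refl S u
    | refl u => exact grel_refl S u
    | symm _ _ _ ih => exact grel_symm ih
    | trans _ _ _ _ _ ih1 ih2 => exact grel_trans ih1 ih2
  · rcases grel_insert_swap_cases hne h with h | ⟨h1, h2⟩ | ⟨h1, h2⟩
    · exact h
    · exact grel_trans h1 (grel_trans hab h2)
    · exact grel_trans h1 (grel_trans (grel_symm hab) h2)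

/-- strict decrease in orbit count -/
theorem qc_lt_of_lt {S T : Set (Perm α)} (hle : ∀ x y, grel S x y → grel T x y)
    {a b : α} (hT : grel T a b) (hS : ¬ grel S a b) : qc T < qc S := by
  classical
  have : Fintype (Quot (brel S)) := Fintype.ofFinite _
  have : Fintype (Quot (brel T)) := Fintype.ofFinite _
  rw [qc, qc, Nat.card_eq_fintype_card, Nat.card_eq_fintype_card]
  apply Fintype.card_lt_of_surjective_not_injective
    (f := Quot.lift (fun x => Quot.mk (brel T) x)
      (fun u v huv => quot_mk_eq_iff.2 (hle u v (.rel _ _ huv))))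
  · intro q
    obtain ⟨x, rfl⟩ := Quot.exists_rep q
    exact ⟨Quot.mk _ x, rfl⟩
  · intro hinj
    exact hS (quot_mk_eq_iff.1 (hinj (a₁ := Quot.mk _ a) (a₂ := Quot.mk _ b)
      (quot_mk_eq_iff.2 hT)))

/-- **Merge core**: either `a, b` lie on the same cycle of `π`, or on the same cycle
of `π * swap a b`. -/
theorem sameCycle_or_sameCycle_mul_swap (π : Perm α) {a b : α} (hab : a ≠ b) :
    π.SameCycle a b ∨ (π * Equiv.swap a b).SameCycle a b := by
  set ρ := π * Equiv.swap a b with hρ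
  by_cases H : ∃ k : ℕ, (ρ ^ k) a = b
  · obtain ⟨k, hk⟩ := H
    exact Or.inr ⟨k, by rw [zpow_natCast]; exact hk⟩
  · push_neg at H
    left
    have key : ∀ j : ℕ, 1 ≤ j → (∃ m : ℕ, 1 ≤ m ∧ (π ^ m) b = a) ∨ (ρ ^ j) a = (π ^ j) b := by
      intro j hj
      induction j with
      | zero => omega
      | succ n ih =>
          rcases Nat.eq_zero_or_pos n with rfl | hn
          · right
            simp [hρ, Perm.mul_apply]
          · rcases ih hn with h | h
            · exact Or.inl h
            · by_cases ha : (π ^ n) b = a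
              · exact Or.inl ⟨n, hn, ha⟩
              · have hb : (π ^ n) b ≠ b := fun hbb => H n (h.trans hbb)
                right
                have : (ρ ^ (n + 1)) a = ρ ((π ^ n) b) := by
                  rw [pow_succ', Perm.mul_apply, h]
                rw [this, hρ, Perm.mul_apply, Equiv.swap_apply_of_ne_of_ne ha hb,
                  pow_succ', Perm.mul_apply]
    have h1 : 1 ≤ orderOf ρ := orderOf_pos ρ
    rcases key (orderOf ρ) h1 with ⟨m, hm, hmeq⟩ | h
    · exact (Equiv.Perm.SameCycle.symm ⟨m, by rw [zpow_natCast]; exact hmeq⟩)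
    · rw [pow_orderOf_eq_one] at h
      exact (Equiv.Perm.SameCycle.symm ⟨(orderOf ρ : ℤ), by rw [zpow_natCast]; exact h.symm⟩)

theorem grel_pow {π : Perm α} (n : ℕ) (x : α) : grel {π} x ((π ^ n) x) := by
  induction n with
  | zero => simpa using grel_refl _ x
  | succ n ih =>
      have : grel {π} ((π ^ n) x) (π ((π ^ n) x)) := grel_base (Set.mem_singleton π) _
      rw [pow_succ', Perm.mul_apply]
      exact grel_trans ih this

theorem grel_singleton_iff {π : Perm α} {x y : α} : grel {π} x y ↔ π.SameCycle x y := by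
  constructor
  · intro h
    induction h with
    | rel u v huv =>
        obtain ⟨g, hg, rfl⟩ := huv
        rw [Set.mem_singleton_iff] at hg
        subst hg
        exact ⟨1, by simp⟩
    | refl u => exact Equiv.Perm.SameCycle.refl _ _
    | symm _ _ _ ih => exact ih.symm
    | trans _ _ _ _ _ ih1 ih2 => exact ih1.trans ih2
  · rintro ⟨i, rfl⟩
    rcases i with n | n
    · rw [Int.ofNat_eq_coe, zpow_natCast]
      exact grel_pow n x
    · rw [Int.negSucc_eq, zpow_neg]
      apply grel_symm
      have := grel_pow (π := π) (n + 1) (((π ^ ((n : ℤ) + 1))⁻¹) x)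
      rw [show ((π : Perm α) ^ ((n : ℤ) + 1))⁻¹ = (π ^ (n + 1))⁻¹ by
        rw [← zpow_natCast]; push_cast; ring_nf] at this ⊢
      rwa [show ∀ (h : Perm α) (y : α), h (h⁻¹ y) = y from fun h y => h.apply_symm_apply y] at this

theorem qc_empty : qc (∅ : Set (Perm α)) = Fintype.card α := by
  have hid : ∀ x y : α, grel ∅ x y → x = y := by
    intro x y h
    induction h with
    | rel u v huv => exact absurd huv (by simp [brel])
    | refl u => rfl
    | symm _ _ _ ih => exact ih.symm
    | trans _ _ _ _ _ ih1 ih2 => exact ih1.trans ih2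
  rw [qc, ← Nat.card_eq_fintype_card]
  symm
  apply Nat.card_eq_of_bijective (Quot.mk _)
  constructor
  · intro x y h
    exact hid x y (quot_mk_eq_iff.1 h)
  · exact Quot.exists_rep

theorem qc_singleton (π : Perm α) :
    qc {π} = Multiset.card π.cycleType + (Fintype.card α - π.support.card) := by
  classical
  let f : Quot (brel ({π} : Set (Perm α))) →
      {c // c ∈ π.cycleFactorsFinset} ⊕ {x // x ∈ π.supportᶜ} := by
    refine Quot.lift (fun x =>
      if hx : x ∈ π.support then
        Sum.inl ⟨π.cycleOf x, Equiv.Perm.cycleOf_mem_cycleFactorsFinset_iff.2 hx⟩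
      else Sum.inr ⟨x, Finset.mem_compl.2 hx⟩) ?_
    intro u v huv
    have hsc : π.SameCycle u v := grel_singleton_iff.1 (Relation.EqvGen.rel u v huv)
    by_cases hu : u ∈ π.support
    · have hv : v ∈ π.support := by
        obtain ⟨i, rfl⟩ := hsc
        rwa [Equiv.Perm.zpow_apply_mem_support]
      simp only [dif_pos hu, dif_pos hv, Sum.inl.injEq, Subtype.mk.injEq]
      exact hsc.cycleOf_eq
    · have : v = u := by
        obtain ⟨i, rfl⟩ := hsc
        exact Equiv.Perm.zpow_apply_eq_self_of_apply_eq_self (by simpa using hu) i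
      rw [this]
  have hbij : Function.Bijective f := by
    constructor
    · intro u v huv
      obtain ⟨x, rfl⟩ := Quot.exists_rep u
      obtain ⟨y, rfl⟩ := Quot.exists_rep v
      by_cases hx : x ∈ π.support <;> by_cases hy : y ∈ π.support <;>
        simp only [f, Quot.lift_mk, hx, hy, dite_true, dite_false, not_true, not_false_iff,
          Sum.inl.injEq, Sum.inr.injEq, Subtype.mk.injEq, reduceCtorEq] at huv
      · refine quot_mk_eq_iff.2 (grel_singleton_iff.2 ?_)
        have hy' : y ∈ (π.cycleOf x).support := by
          rw [huv]
          exact (Equiv.Perm.mem_support_cycleOf_iff).2 ⟨Equiv.Perm.SameCycle.refl _ _, hy⟩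
        exact ((Equiv.Perm.mem_support_cycleOf_iff).1 hy').1
      · exact huv ▸ rfl
    · rintro (⟨c, hc⟩ | ⟨x, hx⟩)
      · have hcyc : c.IsCycle := (Equiv.Perm.mem_cycleFactorsFinset_iff.1 hc).1
        obtain ⟨x, hxc⟩ := Finset.card_pos.1 (lt_of_lt_of_le two_pos hcyc.two_le_card_support)
        have hxπ : x ∈ π.support := Equiv.Perm.mem_cycleFactorsFinset_support_le hc hxc
        refine ⟨Quot.mk _ x, ?_⟩
        simp only [f, Quot.lift_mk, dif_pos hxπ, Sum.inl.injEq, Subtype.mk.injEq]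
        exact (Equiv.Perm.cycle_is_cycleOf hxc hc).symm
      · refine ⟨Quot.mk _ x, ?_⟩
        simp only [f, Quot.lift_mk, dif_neg (Finset.mem_compl.1 hx)]
  have := Nat.card_eq_of_bijective f hbij
  rw [qc, this, Nat.card_sum, Nat.card_eq_fintype_card, Nat.card_eq_fintype_card,
    Fintype.card_coe, Fintype.card_coe, Finset.card_compl, Equiv.Perm.cycleType_def,
    Multiset.card_map]
  rfl

theorem qc_singleton_eq_parts_card (π : Perm α) :
    qc {π} = π.partition.parts.card := by
  rw [qc_singleton, Equiv.Perm.parts_partition, Multiset.card_add, Multiset.card_replicate]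

theorem qc_one : qc ({1} : Set (Perm α)) = Fintype.card α := by
  rw [qc_singleton]
  simp

theorem isCycle_swap_decomp :
    ∀ (n : ℕ) (f : Perm α), f.IsCycle → f.support.card = n →
      ∃ l : List (Perm α), (∀ t ∈ l, t.IsSwap) ∧ l.prod = f ∧ l.length + 1 = f.support.card := by
  intro n
  induction n using Nat.strong_induction_on with
  | _ n ih =>
    intro f hf hn
    obtain ⟨x, hx, -⟩ := id hf
    by_cases h1 : f (f x) = x
    · have hfs : f = Equiv.swap x (f x) := hf.eq_swap_of_apply_apply_eq_self hx h1
      refine ⟨[f], ?_, by simp, ?_⟩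
      · intro t ht
        rw [List.mem_singleton] at ht
        rw [ht]
        exact ⟨x, f x, fun h => hx h.symm, hfs⟩
      · rw [List.length_singleton, hfs, Equiv.Perm.card_support_swap fun h => hx h.symm]
    · set g := Equiv.swap x (f x) * f with hg
      have hgc : g.IsCycle := hf.swap_mul hx h1
      have hsupp : g.support = f.support \ {x} := Equiv.Perm.support_swap_mul_eq f x h1
      have hxs : x ∈ f.support := Equiv.Perm.mem_support.2 hx
      have hcard : g.support.card = f.support.card - 1 := by
        rw [hsupp, Finset.sdiff_singleton_eq_erase, Finset.card_erase_of_mem hxs]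
      have hlt : g.support.card < n := by
        have h0 : 0 < f.support.card := Finset.card_pos.2 ⟨x, hxs⟩
        omega
      obtain ⟨l, hl1, hl2, hl3⟩ := ih _ hlt g hgc rfl
      refine ⟨Equiv.swap x (f x) :: l, ?_, ?_, ?_⟩
      · intro t ht
        rcases List.mem_cons.1 ht with rfl | ht
        exacts [⟨x, f x, fun h => hx h.symm, rfl⟩, hl1 t ht]
      · rw [List.prod_cons, hl2, hg, ← mul_assoc, Equiv.swap_mul_self, one_mul]
      · have h2 : 2 ≤ f.support.card := hf.two_le_card_support
        simp only [List.length_cons]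
        omega

theorem swap_decomp :
    ∀ (n : ℕ) (f : Perm α), f.support.card = n →
      ∃ l : List (Perm α), (∀ t ∈ l, t.IsSwap) ∧ l.prod = f ∧
        l.length + Multiset.card f.cycleType = f.support.card := by
  intro n
  induction n using Nat.strong_induction_on with
  | _ n ih =>
    intro f hn
    rcases eq_or_ne f 1 with rfl | hf1
    · exact ⟨[], by simp, by simp, by simp⟩
    · obtain ⟨x, hx⟩ := Finset.nonempty_iff_ne_empty.2
        (fun h => hf1 (Equiv.Perm.support_eq_empty_iff.1 h))
      set c := f.cycleOf x with hc
      have hcm : c ∈ f.cycleFactorsFinset := Equiv.Perm.cycleOf_mem_cycleFactorsFinset_iff.2 hx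
      have hcyc : c.IsCycle := Equiv.Perm.isCycle_cycleOf f (Equiv.Perm.mem_support.1 hx)
      set g := f * c⁻¹ with hgdef
      have hdisj : g.Disjoint c := Equiv.Perm.disjoint_mul_inv_of_mem_cycleFactorsFinset hcm
      have hfg : g * c = f := by rw [hgdef, inv_mul_cancel_right]
      have hct : Multiset.card f.cycleType = Multiset.card g.cycleType + 1 := by
        rw [← hfg, hdisj.cycleType_mul, Multiset.card_add, hcyc.cycleType]
        simp
      have hsupp : f.support.card = g.support.card + c.support.card := by
        rw [← hfg, hdisj.support_mul,
          Finset.card_union_of_disjoint hdisj.disjoint_support]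
      have hc2 : 2 ≤ c.support.card := hcyc.two_le_card_support
      have hlt : g.support.card < n := by omega
      obtain ⟨lg, hg1, hg2, hg3⟩ := ih _ hlt g rfl
      obtain ⟨lc, hc1', hc2', hc3'⟩ := isCycle_swap_decomp c.support.card c hcyc rfl
      refine ⟨lg ++ lc, ?_, ?_, ?_⟩
      · intro t ht
        rcases List.mem_append.1 ht with ht | ht
        exacts [hg1 t ht, hc1' t ht]
      · rw [List.prod_append, hg2, hc2', hfg]
      · rw [List.length_append]
        omega

theorem even_length_of_swap_prod_one {l : List (Perm α)} (hl : ∀ t ∈ l, t.IsSwap)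
    (hprod : l.prod = 1) : Even l.length := by
  have := Equiv.Perm.sign_prod_list_swap hl
  rw [hprod, map_one] at this
  rcases Nat.even_or_odd l.length with h | h
  · exact h
  · exfalso
    rw [Odd.neg_one_pow h] at this
    exact (by decide : ¬ ((1 : ℤˣ) = -1)) this

theorem grel_of_brel_imp {S T : Set (Perm α)} (h : ∀ x y, brel S x y → grel T x y)
    {x y : α} (hxy : grel S x y) : grel T x y := by
  induction hxy with
  | rel u v huv => exact h u v huv
  | refl u => exact grel_refl T u
  | symm _ _ _ ih => exact grel_symm ih
  | trans _ _ _ _ _ ih1 ih2 => exact grel_trans ih1 ih2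

theorem grel_prod_le {l : List (Perm α)} {x y : α} (h : grel {l.prod} x y) :
    grel {g | g ∈ l} x y := by
  refine grel_of_brel_imp (fun u v huv => ?_) h
  obtain ⟨g, hg, rfl⟩ := huv
  rw [Set.mem_singleton_iff] at hg
  subst hg
  exact grel_list_prod (fun g hg => hg) u

/-- **Ree's inequality**, list-of-transpositions form. -/
theorem main_ineq : ∀ l : List (Perm α), (∀ t ∈ l, t.IsSwap) →
    Fintype.card α + qc {l.prod} ≤ l.length + 2 * qc {g | g ∈ l} := by
  intro l
  induction l using List.reverseRecOn with
  | nil =>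
      have h0 : ({g | g ∈ ([] : List (Perm α))} : Set (Perm α)) = ∅ := by ext g; simp
      intro _
      simp only [List.prod_nil, List.length_nil, h0, qc_one, qc_empty, zero_add]
      omega
  | append_singleton l t ih =>
      intro hl
      obtain ⟨a, b, hab, rfl⟩ := hl t (by simp)
      have hl' : ∀ t ∈ l, Equiv.Perm.IsSwap t := fun t ht => hl t (by simp [ht])
      have ihl := ih hl'
      set S : Set (Perm α) := {g | g ∈ l} with hS
      have hset : ({g | g ∈ l ++ [Equiv.swap a b]} : Set (Perm α)) = S ∪ {Equiv.swap a b} := by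
        ext g; simp [hS, List.mem_append, or_comm]
      have hprod : (l ++ [Equiv.swap a b]).prod = l.prod * Equiv.swap a b := by
        rw [List.prod_append, List.prod_singleton]
      rw [hset, hprod, List.length_append, List.length_singleton]
      set π' := l.prod with hπ'
      set π := π' * Equiv.swap a b with hπ
      have hπ't : π' = π * Equiv.swap a b := by
        rw [hπ, mul_assoc, Equiv.swap_mul_self, mul_one]
      by_cases hcase : grel S a b
      · -- the swap does not change the orbits of the generated group
        have key1 : qc {π} ≤ qc {π'} + 1 := by
          have h1 : qc {π} ≤ qc ({π} ∪ {Equiv.swap a b}) + 1 :=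
            qc_le_qc_insert_swap_add_one {π} hab
          have h2 : qc ({π} ∪ {Equiv.swap a b}) ≤ qc {π'} := by
            refine qc_le_of_le (fun x y hxy => ?_)
            refine grel_of_brel_imp (fun u v huv => ?_) hxy
            obtain ⟨g, hg, rfl⟩ := huv
            rw [Set.mem_singleton_iff] at hg
            subst hg
            have s1 : grel ({π} ∪ {Equiv.swap a b}) u (Equiv.swap a b u) :=
              grel_base (Or.inr rfl) u
            have s2 : grel ({π} ∪ {Equiv.swap a b}) (Equiv.swap a b u) (π (Equiv.swap a b u)) :=
              grel_base (Or.inl rfl) _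
            have : π' u = π (Equiv.swap a b u) := by rw [hπ't, Perm.mul_apply]
            rw [this]
            exact grel_trans s1 s2
          omega
        have key2 : qc S ≤ qc (S ∪ {Equiv.swap a b}) :=
          qc_le_of_le (fun x y hxy => grel_insert_swap_of_grel hcase hxy)
        omega
      · -- genuine merge: orbit count of the product drops
        have hnot : ¬ grel {π'} a b := by
          intro h
          exact hcase (grel_prod_le h)
        have hπab : grel {π} a b := by
          rcases sameCycle_or_sameCycle_mul_swap π' hab with h | h
          · exact absurd (grel_singleton_iff.2 h) hnot
          · exact grel_singleton_iff.2 h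
        have key1 : qc {π} < qc {π'} := by
          refine qc_lt_of_lt (fun x y hxy => ?_) hπab hnot
          refine grel_of_brel_imp (fun u v huv => ?_) hxy
          obtain ⟨g, hg, rfl⟩ := huv
          rw [Set.mem_singleton_iff] at hg
          subst hg
          have hstep : grel {π} u (Equiv.swap a b u) := by
            rcases eq_or_ne u a with rfl | hua
            · rwa [Equiv.swap_apply_left]
            · rcases eq_or_ne u b with rfl | hub
              · rw [Equiv.swap_apply_right]
                exact grel_symm hπab
              · rw [Equiv.swap_apply_of_ne_of_ne hua hub]
                exact grel_refl _ u
          have : π' u = π (Equiv.swap a b u) := by rw [hπ't, Perm.mul_apply]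
          rw [this]
          exact grel_trans hstep (grel_base (Set.mem_singleton π) _)
        have key2 : qc S ≤ qc (S ∪ {Equiv.swap a b}) + 1 :=
          qc_le_qc_insert_swap_add_one S hab
        omega

end Test
end RH

/-- If `σ 0, …, σ (k-1)` are permutations of `{1, …, d}` whose
right-to-left product is the identity and which generate a transitive subgroup, then
there is a unique nonnegative integer `g` satisfying the Riemann–Hurwitz formula
`∑ i (d − c(σ i)) − 2 g = 2 d − 2`, where `c(σ)` is the number of disjoint cycles of `σ`
(counting fixed points), i.e. the number of parts of the partition of `d` attached to `σ`. -/
theorem riemannHurwitz_genus_existsUnique (d k : ℕ) (hd : 1 ≤ d)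
    (σ : Fin k → Equiv.Perm (Fin d))
    (hprod : (List.ofFn σ).reverse.prod = 1)
    (htrans : ∀ i j : Fin d, ∃ π ∈ Subgroup.closure (Set.range σ), π i = j) :
    ∃! g : ℕ,
      (∑ i : Fin k, ((d : ℤ) - (((σ i).partition.parts.card : ℤ)))) - 2 * g
        = 2 * d - 2 := by
  classical
  have hcard : Fintype.card (Fin d) = d := Fintype.card_fin d
  -- minimal transposition decompositions of the σ i
  have hdec := fun i : Fin k => RH.swap_decomp ((σ i).support.card) (σ i) rfl
  choose l hlswap hlprod hllen using hdec
  set L : List (Equiv.Perm (Fin d)) := ((List.ofFn fun i => l i).reverse).flatten with hL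
  have hmemL : ∀ i : Fin k, ∀ g ∈ l i, g ∈ L := by
    intro i g hg
    rw [hL, List.mem_flatten]
    exact ⟨l i, by rw [List.mem_reverse]; exact List.mem_ofFn.2 ⟨i, rfl⟩, hg⟩
  have hLswap : ∀ t ∈ L, t.IsSwap := by
    intro t ht
    rw [hL, List.mem_flatten] at ht
    obtain ⟨m, hm, htm⟩ := ht
    rw [List.mem_reverse] at hm
    rw [List.mem_ofFn] at hm
    obtain ⟨i, rfl⟩ := hm
    exact hlswap i t htm
  have hLprod : L.prod = 1 := by
    rw [hL, List.prod_flatten, List.map_reverse, List.map_ofFn]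
    have : (List.ofFn fun i => (l i).prod) = List.ofFn σ := by
      congr 1
      funext i
      exact hlprod i
    rw [show ((List.prod ∘ fun i => l i) : Fin k → Equiv.Perm (Fin d))
        = fun i => (l i).prod from rfl] at *
    rw [this]
    exact hprod
  -- orbit count of the generated group is 1
  have htop : ∀ x y : Fin d, RH.grel {g | g ∈ L} x y := by
    have hcl : ∀ π ∈ Subgroup.closure (Set.range σ), ∀ z : Fin d,
        RH.grel {g | g ∈ L} z (π z) := by
      intro π hπ
      induction hπ using Subgroup.closure_induction with
      | mem g hg =>
          obtain ⟨i, rfl⟩ := hg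
          intro z
          rw [← hlprod i]
          exact RH.grel_list_prod (fun g hg => hmemL i g hg) z
      | one => intro z; simpa using RH.grel_refl _ z
      | mul x y hx hy ihx ihy =>
          intro z
          have h1 := ihy z
          have h2 := ihx (y z)
          rw [Equiv.Perm.mul_apply]
          exact RH.grel_trans h1 h2
      | inv x hx ihx => exact RH.grel_inv ihx
    intro x y
    obtain ⟨π, hπ, hπxy⟩ := htrans x y
    have := hcl π hπ x
    rwa [hπxy] at this
  have hqtop : RH.qc {g | g ∈ L} = 1 := by
    rw [RH.qc]
    rw [Nat.card_eq_one_iff_exists]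
    refine ⟨Quot.mk _ ⟨0, hd⟩, ?_⟩
    intro q
    obtain ⟨x, rfl⟩ := Quot.exists_rep q
    exact RH.quot_mk_eq_iff.2 (htop x ⟨0, hd⟩)
  -- Ree's inequality
  have hineq := RH.main_ineq L hLswap
  rw [hLprod, RH.qc_one, hqtop, hcard] at hineq
  -- parity
  have heven : Even L.length := RH.even_length_of_swap_prod_one hLswap hLprod
  -- identify the sum with the length of L
  have hsum : (∑ i : Fin k, ((d : ℤ) - (((σ i).partition.parts.card : ℤ)))) = L.length := by
    have hlen : L.length = ∑ i : Fin k, (l i).length := by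
      rw [hL, List.length_flatten, List.map_reverse, List.sum_reverse, List.map_ofFn]
      rw [List.sum_ofFn]
      rfl
    rw [hlen]
    push_cast
    refine Finset.sum_congr rfl (fun i _ => ?_)
    have h1 : (σ i).partition.parts.card
        = Multiset.card (σ i).cycleType + (d - (σ i).support.card) := by
      rw [Equiv.Perm.parts_partition, Multiset.card_add, Multiset.card_replicate, hcard]
    have h2 : (σ i).support.card ≤ d := by
      simpa [hcard] using Finset.card_le_univ (σ i).support
    have h3 := hllen i
    have h4 : Multiset.card (σ i).cycleType ≤ (σ i).support.card := by omega
    rw [h1]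
    push_cast [Nat.cast_sub h2]
    omega
  rw [hsum]
  obtain ⟨m, hm⟩ := heven
  refine ⟨m - (d - 1), ?_, ?_⟩
  · push_cast
    omega
  · intro g hg
    push_cast at hg
    omega
end

section
/- Let P = (g, d, B, A, φ, br, rm) be a portrait, let 𝒯 be a B-marked stable tree, let (ord, mon, cyc) be a P-decoration of 𝒯, and let h be a half-edge of 𝒯. Then the triple (ord′, mon′, cyc′) obtained from (ord, mon, cyc) by the anticlockwise braid move at h is again a P-decoration of 𝒯 (it satisfies conditions (i)–(v)); the same holds for the clockwise braid move at h. -/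
open scoped Classical

/-- A `B`-marked graph (with legs), in the half-edge formalism: a finite set `H` of
half-edges, a finite set `V` of vertices, an attachment map `base`, an involution `pair`
whose 2-element orbits are the edges and whose fixed points are the legs, and a labelling
of the legs by `B`. -/
structure BMarkedGraph (B : Type) : Type 1 where
  /-- the half-edges -/
  H : Type
  /-- the vertices -/
  V : Type
  [fintH : Fintype H]
  [decH : DecidableEq H]
  [fintV : Fintype V]
  [decV : DecidableEq V]
  /-- the vertex a half-edge is attached to -/
  base : H → V
  /-- the edge-pairing involution; legs are exactly its fixed points -/
  pair : H → H
  pair_invol : ∀ h, pair (pair h) = h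
  /-- the labelling of the legs by `B` -/
  leg : B → H
  leg_inj : Function.Injective leg
  pair_leg : ∀ b, pair (leg b) = leg b
  leg_of_fixed : ∀ h, pair h = h → ∃ b, leg b = h

attribute [instance] BMarkedGraph.fintH BMarkedGraph.decH BMarkedGraph.fintV BMarkedGraph.decV

namespace BMarkedGraph

variable {B : Type} (T : BMarkedGraph B)

/-- Two vertices are adjacent if some edge joins them. -/
def Adj (v w : T.V) : Prop :=
  ∃ h, T.pair h ≠ h ∧ T.base h = v ∧ T.base (T.pair h) = w

/-- A `B`-marked graph is a stable tree if it has no self-loops, is connected, has exactly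
one fewer edge than it has vertices (so that it is a tree), and every vertex has total
valence (incident edge half-edges plus legs) at least three. -/
def IsStableTree : Prop :=
  (∀ h, T.pair h ≠ h → T.base (T.pair h) ≠ T.base h) ∧
  (∀ v w : T.V, Relation.ReflTransGen T.Adj v w) ∧
  (Fintype.card {h : T.H // T.pair h ≠ h} + 2 = 2 * Fintype.card T.V) ∧
  (∀ v : T.V, 3 ≤ Fintype.card {h : T.H // T.base h = v})

/-- Adjacency avoiding the vertex `v`. -/
def AdjAvoid (v x y : T.V) : Prop := x ≠ v ∧ y ≠ v ∧ T.Adj x y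

/-- `T.InSide h k` says that the half-edge `k` lies in the connected component of
`T ∖ {base h}` containing `h`: either `k = h`, or `h` belongs to an edge and the base of
`k` is reachable from the other endpoint of that edge without passing through `base h`. -/
def InSide (h k : T.H) : Prop :=
  k = h ∨ (T.pair h ≠ h ∧ k ≠ h ∧
    Relation.ReflTransGen (T.AdjAvoid (T.base h)) (T.base (T.pair h)) (T.base k))

end BMarkedGraph

/-- A portrait `P = (g, d, B, A, φ, br, rm)`: the combinatorial data prescribing the
branching behaviour of the branched covers under consideration.  Here `br b` is a
partition of `d` recorded as a multiset of positive parts summing to `d`. -/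
structure Portrait (B A : Type) [Fintype B] [DecidableEq B] [Fintype A] [DecidableEq A] where
  /-- the source genus -/
  g : ℕ
  /-- the degree -/
  d : ℕ
  d_pos : 1 ≤ d
  card_B : 3 ≤ Fintype.card B
  card_A : (2 : ℤ) - 2 * (g : ℤ) - (Fintype.card A : ℤ) < 0
  /-- the function on the source marks -/
  phi : A → B
  /-- the branch profiles of the target marks: partitions of `d` -/
  br : B → Multiset ℕ
  /-- the ramifications (local degrees) at the source marks -/
  rm : A → ℕ
  rm_pos : ∀ a, 1 ≤ rm a
  br_pos : ∀ b, ∀ n ∈ br b, 1 ≤ n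
  br_sum : ∀ b, (br b).sum = d
  /-- the Riemann–Hurwitz formula -/
  riemannHurwitz :
    (∑ b : B, ((d : ℤ) - ((br b).card : ℤ))) - 2 * (g : ℤ) = 2 * (d : ℤ) - 2
  /-- for each `b ∈ B`, `(rm a)_{a ∈ φ⁻¹ b}` is a sub-multiset of `br b` -/
  rm_sub : ∀ b : B, (Finset.univ.filter fun a => phi a = b).val.map rm ≤ br b

variable {B A : Type} [Fintype B] [DecidableEq B] [Fintype A] [DecidableEq A]

/-- The raw data `(ord, mon, cyc)` of a `P`-decoration of the `B`-marked graph `T`.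
A cycle of a leg permutation is recorded by one of its points, so `cyc : A → Fin P.d`
sends `a` to a point of the cycle `cyc(a)` of `mon(φ a)`. -/
structure PreDecoration (P : Portrait B A) (T : BMarkedGraph B) where
  /-- the cyclic orderings of the half-edges around the vertices -/
  ord : Equiv.Perm T.H
  /-- the permutation attached to each half-edge -/
  mon : T.H → Equiv.Perm (Fin P.d)
  /-- a point of the cycle labelled by each source mark -/
  cyc : A → Fin P.d

/-- `prodAlong ord mon h n = mon (ord^(n-1) h) * ⋯ * mon (ord h) * mon h`: the
right-to-left product of the permutations along `n` successive half-edges of the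
`ord`-cycle starting at `h`. -/
def prodAlong {H : Type} {d : ℕ} (ord : Equiv.Perm H) (mon : H → Equiv.Perm (Fin d)) :
    H → ℕ → Equiv.Perm (Fin d)
  | _, 0 => 1
  | h, n + 1 => prodAlong ord mon (ord h) n * mon h

/-- `(ord, mon, cyc)` is a `P`-decoration of `T`:  `ord` preserves the vertices and has
exactly one cycle for each vertex, consisting of all the half-edges incident with it;
(i) the cyclic product of the permutations around each vertex is the identity;
(ii) the permutations on the two half-edges of an edge are inverse;
(iii) each leg permutation `mon (leg b)` has cycle type `br b` (as a partition of `d`,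
  fixed points included);
(iv) `cyc` is injective into the disjoint union of the cycles of the leg permutations,
  and the cycle of `mon (leg (φ a))` through `cyc a` has length `rm a`;
(v) the leg permutations generate a transitive subgroup of `S_d`. -/
def IsDecoration (P : Portrait B A) (T : BMarkedGraph B) (D : PreDecoration P T) : Prop :=
  (∀ h, T.base (D.ord h) = T.base h) ∧
  (∀ h k, T.base h = T.base k → ∃ n : ℕ, (D.ord ^ n) h = k) ∧
  (∀ h (n : ℕ), (D.ord ^ n) h = h → prodAlong D.ord D.mon h n = 1) ∧
  (∀ h, T.pair h ≠ h → D.mon (T.pair h) = (D.mon h)⁻¹) ∧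
  (∀ b, (Equiv.Perm.partition (D.mon (T.leg b))).parts = P.br b) ∧
  (∀ a a', P.phi a = P.phi a' →
    (D.mon (T.leg (P.phi a))).SameCycle (D.cyc a) (D.cyc a') → a = a') ∧
  (∀ a, Function.minimalPeriod (⇑(D.mon (T.leg (P.phi a)))) (D.cyc a) = P.rm a) ∧
  (∀ i j : Fin P.d, ∃ π ∈ Subgroup.closure (Set.range fun b => D.mon (T.leg b)), π i = j)

/-- Global conjugation of a decoration by `τ ∈ S_d`. -/
def globalConj {P : Portrait B A} {T : BMarkedGraph B} (τ : Equiv.Perm (Fin P.d))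
    (D : PreDecoration P T) : PreDecoration P T where
  ord := D.ord
  mon := fun h => τ * D.mon h * τ⁻¹
  cyc := fun a => τ (D.cyc a)

/-- The anticlockwise braid move at the half-edge `h`: with `h̃ = ord h`, the half-edge
`h` is shifted one step anticlockwise through `h̃`, and the permutations and cycle labels
on the component of `T ∖ {base h}` containing `h` are conjugated by `mon h̃`. -/
noncomputable def braidACW {P : Portrait B A} {T : BMarkedGraph B}
    (D : PreDecoration P T) (h : T.H) : PreDecoration P T where
  ord := Equiv.swap h (D.ord h) * D.ord * (Equiv.swap h (D.ord h))⁻¹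
  mon := fun k =>
    if T.InSide h k then D.mon (D.ord h) * D.mon k * (D.mon (D.ord h))⁻¹ else D.mon k
  cyc := fun a =>
    if T.InSide h (T.leg (P.phi a)) then D.mon (D.ord h) (D.cyc a) else D.cyc a

/-- The clockwise braid move at the half-edge `h`: with `h̃ = ord⁻¹ h`, the half-edge
`h` is shifted one step clockwise through `h̃`, and the permutations and cycle labels
on the component of `T ∖ {base h}` containing `h` are conjugated by `(mon h̃)⁻¹`. -/
noncomputable def braidCW {P : Portrait B A} {T : BMarkedGraph B}
    (D : PreDecoration P T) (h : T.H) : PreDecoration P T where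
  ord := Equiv.swap h (D.ord⁻¹ h) * D.ord * (Equiv.swap h (D.ord⁻¹ h))⁻¹
  mon := fun k =>
    if T.InSide h k then (D.mon (D.ord⁻¹ h))⁻¹ * D.mon k * D.mon (D.ord⁻¹ h) else D.mon k
  cyc := fun a =>
    if T.InSide h (T.leg (P.phi a)) then (D.mon (D.ord⁻¹ h))⁻¹ (D.cyc a) else D.cyc a


/-! ### Auxiliary lemmas -/

section PermAux

variable {d : ℕ}

lemma permConj_pow_apply (c σ : Equiv.Perm (Fin d)) (n : ℕ) (x : Fin d) :
    ((c * σ * c⁻¹) ^ n) (c x) = c ((σ ^ n) x) := by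
  rw [conj_pow]
  simp [Equiv.Perm.mul_apply]

lemma permConj_isPeriodicPt_iff (c σ : Equiv.Perm (Fin d)) (n : ℕ) (x : Fin d) :
    Function.IsPeriodicPt (⇑(c * σ * c⁻¹)) n (c x) ↔ Function.IsPeriodicPt (⇑σ) n x := by
  unfold Function.IsPeriodicPt Function.IsFixedPt
  rw [Equiv.Perm.iterate_eq_pow, Equiv.Perm.iterate_eq_pow, permConj_pow_apply]
  exact (Equiv.apply_eq_iff_eq c)

lemma permConj_minimalPeriod (c σ : Equiv.Perm (Fin d)) (x : Fin d) :
    Function.minimalPeriod (⇑(c * σ * c⁻¹)) (c x) = Function.minimalPeriod (⇑σ) x := by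
  apply Nat.dvd_antisymm
  · exact Function.IsPeriodicPt.minimalPeriod_dvd
      ((permConj_isPeriodicPt_iff c σ _ x).2 (Function.isPeriodicPt_minimalPeriod _ _))
  · exact Function.IsPeriodicPt.minimalPeriod_dvd
      ((permConj_isPeriodicPt_iff c σ _ x).1 (Function.isPeriodicPt_minimalPeriod _ _))

lemma perm_orbit_minimalPeriod {α : Type} (σ : Equiv.Perm α) (m : ℕ) (x : α) :
    Function.minimalPeriod (⇑σ) ((σ ^ m) x) = Function.minimalPeriod (⇑σ) x := by
  rw [← Equiv.Perm.iterate_eq_pow]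
  by_cases hx : x ∈ Function.periodicPts (⇑σ)
  · exact Function.minimalPeriod_apply_iterate hx m
  · -- both minimal periods are 0
    have hx' : (⇑σ)^[m] x ∉ Function.periodicPts (⇑σ) := by
      intro hmem
      obtain ⟨n, hn, hper⟩ := hmem
      refine hx ⟨n, hn, ?_⟩
      unfold Function.IsPeriodicPt Function.IsFixedPt at hper ⊢
      have := hper
      rw [← Function.Commute.iterate_iterate_self] at this
      exact (σ ^ m).injective (by simpa [Equiv.Perm.iterate_eq_pow] using this)
    rw [Function.minimalPeriod_eq_zero_of_notMem_periodicPts hx,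
      Function.minimalPeriod_eq_zero_of_notMem_periodicPts hx']

lemma perm_isPeriodic {α : Type} [Fintype α] [DecidableEq α] (σ : Equiv.Perm α) (x : α) :
    Function.IsPeriodicPt (⇑σ) (orderOf σ) x ∧ 0 < orderOf σ := by
  constructor
  · unfold Function.IsPeriodicPt Function.IsFixedPt
    rw [Equiv.Perm.iterate_eq_pow, pow_orderOf_eq_one]
    rfl
  · exact orderOf_pos σ

end PermAux

section ProdAlongAux

variable {H : Type} {d : ℕ}

lemma prodAlong_add (ord : Equiv.Perm H) (mon : H → Equiv.Perm (Fin d)) (k : H) (m n : ℕ) :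
    prodAlong ord mon k (m + n) =
      prodAlong ord mon ((ord ^ m) k) n * prodAlong ord mon k m := by
  induction m generalizing k with
  | zero => simp [prodAlong]
  | succ m ih =>
    have : m + 1 + n = (m + n) + 1 := by omega
    rw [this]
    show prodAlong ord mon (ord k) (m + n) * mon k = _
    rw [ih (ord k)]
    have h2 : (ord ^ m) (ord k) = (ord ^ (m+1)) k := by
      rw [pow_succ]; simp [Equiv.Perm.mul_apply]
    rw [h2, mul_assoc]
    rfl

lemma prodAlong_congr (ord : Equiv.Perm H) (m1 m2 : H → Equiv.Perm (Fin d)) (k : H) (n : ℕ)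
    (h : ∀ j < n, m1 ((ord ^ j) k) = m2 ((ord ^ j) k)) :
    prodAlong ord m1 k n = prodAlong ord m2 k n := by
  induction n generalizing k with
  | zero => rfl
  | succ n ih =>
    show prodAlong ord m1 (ord k) n * m1 k = prodAlong ord m2 (ord k) n * m2 k
    have h0 : m1 k = m2 k := by simpa using h 0 (by omega)
    rw [ih (ord k) (fun j hj => by
      have := h (j+1) (by omega)
      rwa [pow_succ, Equiv.Perm.mul_apply] at this), h0]

lemma prodAlong_conj (ord : Equiv.Perm H) (mon : H → Equiv.Perm (Fin d))
    (c : Equiv.Perm (Fin d)) (k : H) (n : ℕ) :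
    prodAlong ord (fun x => c * mon x * c⁻¹) k n = c * prodAlong ord mon k n * c⁻¹ := by
  induction n generalizing k with
  | zero => simp [prodAlong]
  | succ n ih =>
    show prodAlong ord (fun x => c * mon x * c⁻¹) (ord k) n * (c * mon k * c⁻¹) = _
    rw [ih]
    show _ = c * (prodAlong ord mon (ord k) n * mon k) * c⁻¹
    group

lemma prodAlong_fixed_pow {α : Type} (ord : Equiv.Perm α) (L q : ℕ) (k : α)
    (hk : (ord ^ L) k = k) : (ord ^ (q * L)) k = k := by
  induction q with
  | zero => simp
  | succ q ih =>
    have : (q + 1) * L = q * L + L := by ring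
    rw [this, pow_add]
    simp only [Equiv.Perm.mul_apply]
    rw [hk]
    exact ih

lemma prodAlong_pow (ord : Equiv.Perm H) (mon : H → Equiv.Perm (Fin d)) (k : H) (L q : ℕ)
    (hk : (ord ^ L) k = k) :
    prodAlong ord mon k (q * L) = (prodAlong ord mon k L) ^ q := by
  induction q with
  | zero => simp [prodAlong]
  | succ q ih =>
    have : (q + 1) * L = q * L + L := by ring
    rw [this, prodAlong_add, prodAlong_fixed_pow ord L q k hk, ih, pow_succ']

lemma prodAlong_relabel (σ ord : Equiv.Perm H) (mon : H → Equiv.Perm (Fin d)) (k : H) (n : ℕ) :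
    prodAlong (σ * ord * σ⁻¹) mon k n = prodAlong ord (fun x => mon (σ x)) (σ⁻¹ k) n := by
  induction n generalizing k with
  | zero => rfl
  | succ n ih =>
    show prodAlong (σ * ord * σ⁻¹) mon ((σ * ord * σ⁻¹) k) n * mon k = _
    rw [ih]
    have h1 : σ⁻¹ ((σ * ord * σ⁻¹) k) = ord (σ⁻¹ k) := by simp [Equiv.Perm.mul_apply]
    rw [h1]
    show _ = prodAlong ord (fun x => mon (σ x)) (ord (σ⁻¹ k)) n * mon (σ (σ⁻¹ k))
    rw [show σ (σ⁻¹ k) = k from σ.apply_symm_apply k]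

lemma prodAlong_mem (ord : Equiv.Perm H) (mon : H → Equiv.Perm (Fin d))
    (K : Subgroup (Equiv.Perm (Fin d))) (k : H) (n : ℕ)
    (h : ∀ j < n, mon ((ord ^ j) k) ∈ K) :
    prodAlong ord mon k n ∈ K := by
  induction n generalizing k with
  | zero => exact one_mem K
  | succ n ih =>
    refine mul_mem (ih (ord k) (fun j hj => by
      have := h (j+1) (by omega)
      rwa [pow_succ, Equiv.Perm.mul_apply] at this)) ?_
    have := h 0 (by omega)
    simpa using this

lemma prodAlong_conj_base (ord : Equiv.Perm H) (mon : H → Equiv.Perm (Fin d)) (s : H)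
    (m L : ℕ) (hLs : (ord ^ L) s = s) :
    prodAlong ord mon ((ord ^ m) s) L =
      prodAlong ord mon s m * prodAlong ord mon s L * (prodAlong ord mon s m)⁻¹ := by
  have h1 := prodAlong_add ord mon s m L
  have h2 := prodAlong_add ord mon s L m
  rw [hLs] at h2
  rw [Nat.add_comm m L] at h1
  rw [h1] at h2
  rw [← h2]
  group

end ProdAlongAux

section GraphAux

open Relation

namespace BMarkedGraph

variable {B : Type} (T : BMarkedGraph B)

/-- Adjacency using only half-edges from `S`. -/
def AdjS (S : Finset T.H) (x y : T.V) : Prop :=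
  ∃ m ∈ S, T.pair m ≠ m ∧ T.base m = x ∧ T.base (T.pair m) = y

/-- Reachability from `v0` in exactly `n` steps using half-edges from `S`. -/
def ReachN (S : Finset T.H) (v0 : T.V) : ℕ → T.V → Prop
  | 0, x => x = v0
  | n + 1, x => ∃ y, ReachN S v0 n y ∧ T.AdjS S y x

lemma adj_symm {x y : T.V} (h : T.Adj x y) : T.Adj y x := by
  obtain ⟨m, hm, hbx, hby⟩ := h
  exact ⟨T.pair m, by rw [T.pair_invol]; exact fun e => hm e.symm, hby, by rw [T.pair_invol]; exact hbx⟩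

lemma adjAvoid_symm (v : T.V) : Symmetric (T.AdjAvoid v) := by
  rintro x y ⟨hx, hy, hadj⟩
  exact ⟨hy, hx, T.adj_symm hadj⟩

lemma reachN_of_reach {S : Finset T.H} {v0 x : T.V}
    (h : Relation.ReflTransGen (T.AdjS S) v0 x) : ∃ n, T.ReachN S v0 n x := by
  induction h with
  | refl => exact ⟨0, rfl⟩
  | tail _ hadj ih => exact ⟨ih.choose + 1, _, ih.choose_spec, hadj⟩

lemma count_lemma (S : Finset T.H) (hpair : ∀ m ∈ S, T.pair m ∈ S)
    (v0 : T.V) (hconn : ∀ x, Relation.ReflTransGen (T.AdjS S) v0 x) :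
    2 * Fintype.card T.V ≤ S.card + 2 := by
  classical
  by_cases hV : ∀ x : T.V, x = v0
  · have : Fintype.card T.V ≤ 1 := Fintype.card_le_one_iff.2 (fun a b => (hV a).trans (hV b).symm)
    omega
  push_neg at hV
  obtain ⟨x0, hx0⟩ := hV
  have hex : ∀ x, ∃ n, T.ReachN S v0 n x := fun x => T.reachN_of_reach (hconn x)
  set dfun : T.V → ℕ := fun x => Nat.find (hex x) with hdfun
  have key : ∀ x : T.V, x ≠ v0 →
      ∃ m, (m ∈ S ∧ T.pair m ≠ m) ∧ T.base (T.pair m) = x ∧ dfun (T.base m) < dfun x := by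
    intro x hx
    have hr : T.ReachN S v0 (dfun x) x := Nat.find_spec (hex x)
    have hd0 : dfun x ≠ 0 := by
      intro h0
      have hr' : T.ReachN S v0 0 x := by rw [← h0]; exact hr
      exact hx hr'
    obtain ⟨n, hn⟩ : ∃ n, dfun x = n + 1 := ⟨dfun x - 1, by omega⟩
    rw [hn] at hr
    obtain ⟨y, hy, m, hmS, hmne, hbm, hbpm⟩ := hr
    refine ⟨m, ⟨hmS, hmne⟩, hbpm, ?_⟩
    have : dfun (T.base m) ≤ n := by
      rw [hbm]
      exact Nat.find_le hy
    omega
  -- nonempty H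
  have hHne : Nonempty T.H := ⟨(key x0 hx0).choose⟩
  have key' : ∀ x : T.V, ∃ m, x ≠ v0 →
      (m ∈ S ∧ T.pair m ≠ m) ∧ T.base (T.pair m) = x ∧ dfun (T.base m) < dfun x := by
    intro x
    by_cases hx : x = v0
    · exact ⟨Classical.arbitrary T.H, fun hc => absurd hx hc⟩
    · obtain ⟨m, hm⟩ := key x hx
      exact ⟨m, fun _ => hm⟩
  choose f hf using key'
  set g : T.V → Finset T.H := fun x => {f x, T.pair (f x)} with hg
  have hfS : ∀ x, x ≠ v0 → f x ∈ S := fun x hx => (hf x hx).1.1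
  have hfne : ∀ x, x ≠ v0 → T.pair (f x) ≠ f x := fun x hx => (hf x hx).1.2
  have hfb : ∀ x, x ≠ v0 → T.base (T.pair (f x)) = x := fun x hx => (hf x hx).2.1
  have hfd : ∀ x, x ≠ v0 → dfun (T.base (f x)) < dfun x := fun x hx => (hf x hx).2.2
  have hgcard : ∀ x, x ≠ v0 → (g x).card = 2 := by
    intro x hx
    rw [hg]
    rw [Finset.card_insert_of_notMem (by
      simp only [Finset.mem_singleton]
      exact fun e => hfne x hx e.symm), Finset.card_singleton]
  have hdisj : ∀ x ∈ Finset.univ.erase v0, ∀ y ∈ Finset.univ.erase v0, x ≠ y →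
      Disjoint (g x) (g y) := by
    intro x hx y hy hxy
    rw [Finset.mem_erase] at hx hy
    rw [Finset.disjoint_left]
    intro z hzx hzy
    rw [hg] at hzx hzy
    simp only [Finset.mem_insert, Finset.mem_singleton] at hzx hzy
    have heq : f x = f y ∨ f x = T.pair (f y) := by
      rcases hzx with rfl | rfl
      · rcases hzy with h' | h'
        · exact Or.inl h'
        · exact Or.inr h'
      · rcases hzy with h' | h'
        · exact Or.inr (by rw [← h', T.pair_invol])
        · refine Or.inl ?_
          have : T.pair (T.pair (f x)) = T.pair (T.pair (f y)) := by rw [h']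
          rwa [T.pair_invol, T.pair_invol] at this
    rcases heq with h' | h'
    · exact hxy (by rw [← hfb x hx.1, ← hfb y hy.1, h'])
    · -- f x = pair (f y) : mutual parenthood, contradiction on dfun
      have h1 : T.base (f y) = x := by
        rw [← hfb x hx.1, h', T.pair_invol]
      have h2 : T.base (f x) = y := by
        rw [h', hfb y hy.1]
      have d1 := hfd x hx.1
      have d2 := hfd y hy.1
      rw [h2] at d1
      rw [h1] at d2
      omega
  have hsub : (Finset.univ.erase v0).biUnion g ⊆ S := by
    intro z hz
    rw [Finset.mem_biUnion] at hz
    obtain ⟨x, hx, hzx⟩ := hz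
    rw [Finset.mem_erase] at hx
    rw [hg] at hzx
    simp only [Finset.mem_insert, Finset.mem_singleton] at hzx
    rcases hzx with rfl | rfl
    · exact hfS x hx.1
    · exact hpair _ (hfS x hx.1)
  have hcount : ((Finset.univ.erase v0).biUnion g).card = 2 * (Fintype.card T.V - 1) := by
    rw [Finset.card_biUnion hdisj]
    rw [Finset.sum_congr rfl (fun x hx => hgcard x (Finset.mem_erase.1 hx).1)]
    rw [Finset.sum_const, smul_eq_mul, Finset.card_erase_of_mem (Finset.mem_univ v0),
      Finset.card_univ]
    ring
  have hle := Finset.card_le_card hsub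
  rw [hcount] at hle
  have hpos : 1 ≤ Fintype.card T.V := Fintype.card_pos_iff.2 ⟨v0⟩
  omega

end BMarkedGraph

end GraphAux

section SepAux

open Relation

namespace BMarkedGraph

variable {B : Type} (T : BMarkedGraph B)

/-- The key tree separation lemma: two distinct edges at `v` lead into disjoint
components of the complement of `v`. -/
lemma sep (hT : T.IsStableTree) {v : T.V} {h k : T.H} (hh : T.pair h ≠ h)
    (hk : T.pair k ≠ k) (hbh : T.base h = v) (hbk : T.base k = v) (hhk : h ≠ k) :
    ¬ Relation.ReflTransGen (T.AdjAvoid v) (T.base (T.pair h)) (T.base (T.pair k)) := by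
  intro hreach
  obtain ⟨hloop, hconn, hcard, hval⟩ := hT
  classical
  set S : Finset T.H :=
    (Finset.univ.filter fun m => T.pair m ≠ m) \ {h, T.pair h} with hS
  have hmemS : ∀ m, m ∈ S ↔ (T.pair m ≠ m ∧ m ≠ h ∧ m ≠ T.pair h) := by
    intro m
    rw [hS]
    simp [Finset.mem_sdiff, Finset.mem_filter, Finset.mem_insert, Finset.mem_singleton,
      not_or, and_assoc]
  have hpairS : ∀ m ∈ S, T.pair m ∈ S := by
    intro m hm
    rw [hmemS] at hm ⊢
    obtain ⟨h1, h2, h3⟩ := hm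
    refine ⟨by rw [T.pair_invol]; exact fun e => h1 e.symm, ?_, ?_⟩
    · intro e
      exact h3 (by rw [← e, T.pair_invol])
    · intro e
      exact h2 (by
        have := congrArg T.pair e
        rwa [T.pair_invol, T.pair_invol] at this)
  have hbph : T.base (T.pair h) ≠ v := by rw [← hbh]; exact hloop h hh
  -- single step lemma inside the avoided region
  have stepS : ∀ a b : T.V, T.AdjAvoid v a b → T.AdjS S a b := by
    rintro a b ⟨ha, hb, m, hm, hba, hbb⟩
    refine ⟨m, ?_, hm, hba, hbb⟩
    rw [hmemS]
    refine ⟨hm, ?_, ?_⟩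
    · rintro rfl
      exact ha (by rw [← hba, hbh])
    · rintro rfl
      rw [T.pair_invol] at hbb
      exact hb (by rw [← hbb, hbh])
  have liftS : ∀ a b : T.V, Relation.ReflTransGen (T.AdjAvoid v) a b →
      Relation.ReflTransGen (T.AdjS S) a b := by
    intro a b hab
    exact Relation.ReflTransGen.mono (fun x y => stepS x y) _ _ hab
  have hkS : k ∈ S := by
    rw [hmemS]
    refine ⟨hk, fun e => hhk e.symm, ?_⟩
    rintro rfl
    exact hbph hbk
  have reach_u2 : Relation.ReflTransGen (T.AdjS S) v (T.base (T.pair k)) :=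
    Relation.ReflTransGen.single ⟨k, hkS, hk, hbk, rfl⟩
  have reach_u1 : Relation.ReflTransGen (T.AdjS S) v (T.base (T.pair h)) :=
    Relation.ReflTransGen.trans reach_u2
      (liftS _ _ (by haveI : Std.Symm (T.AdjAvoid v) := ⟨fun _ _ hh => T.adjAvoid_symm v hh⟩; exact Std.Symm.symm _ _ hreach))
  have hconnS : ∀ x, Relation.ReflTransGen (T.AdjS S) v x := by
    intro x
    induction hconn v x with
    | refl => exact Relation.ReflTransGen.refl
    | @tail b c hb hadj ih =>
      obtain ⟨m, hm, hbm, hbpm⟩ := hadj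
      by_cases hmh : m = h
      · subst hmh
        rw [← hbpm]
        exact reach_u1
      · by_cases hmph : m = T.pair h
        · -- c = base (pair (pair h)) = base h = v
          have : c = v := by rw [← hbpm, hmph, T.pair_invol, hbh]
          rw [this]
        · exact Relation.ReflTransGen.tail ih ⟨m, (hmemS m).2 ⟨hm, hmh, hmph⟩, hm, hbm, hbpm⟩
  have hcl := T.count_lemma S hpairS v hconnS
  have hsubset : ({h, T.pair h} : Finset T.H) ⊆ Finset.univ.filter fun m => T.pair m ≠ m := by
    intro z hz
    simp only [Finset.mem_insert, Finset.mem_singleton] at hz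
    rw [Finset.mem_filter]
    rcases hz with rfl | rfl
    · exact ⟨Finset.mem_univ _, hh⟩
    · exact ⟨Finset.mem_univ _, by rw [T.pair_invol]; exact fun e => hh e.symm⟩
  have hhp : h ∉ ({T.pair h} : Finset T.H) := by
    simp only [Finset.mem_singleton]
    exact fun e => hh e.symm
  have hpcard : ({h, T.pair h} : Finset T.H).card = 2 := by
    rw [Finset.card_insert_of_notMem hhp, Finset.card_singleton]
  have hScard : S.card = (Finset.univ.filter fun m => T.pair m ≠ m).card - 2 := by
    rw [hS, Finset.card_sdiff_of_subset hsubset, hpcard]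
  have hfcard : (Finset.univ.filter fun m => T.pair m ≠ m).card + 2 = 2 * Fintype.card T.V := by
    rw [← hcard]
    congr 1
    rw [Fintype.card_subtype]
  have h2 : 2 ≤ (Finset.univ.filter fun m => T.pair m ≠ m).card := by
    rw [← hpcard]
    exact Finset.card_le_card hsubset
  omega

end BMarkedGraph

end SepAux

section InSideAux

open Relation

namespace BMarkedGraph

variable {B : Type} (T : BMarkedGraph B)

lemma reach_ne {v a b : T.V} (hr : Relation.ReflTransGen (T.AdjAvoid v) a b)
    (ha : a ≠ v) : b ≠ v := by
  induction hr with
  | refl => exact ha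
  | tail _ hadj _ => exact hadj.2.1

lemma inSide_self (h : T.H) : T.InSide h h := Or.inl rfl

lemma not_inSide_base (hT : T.IsStableTree) {h x : T.H} (hx : x ≠ h)
    (hb : T.base x = T.base h) : ¬ T.InSide h x := by
  rintro (rfl | ⟨hph, hxh, hr⟩)
  · exact hx rfl
  · exact T.reach_ne hr (hT.1 h hph) hb

lemma inSide_pair_self {h : T.H} (hph : T.pair h ≠ h) : T.InSide h (T.pair h) :=
  Or.inr ⟨hph, hph, Relation.ReflTransGen.refl⟩

lemma inSide_iff_of_base_ne {h x : T.H} (hb : T.base x ≠ T.base h) :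
    T.InSide h x ↔ (T.pair h ≠ h ∧
      Relation.ReflTransGen (T.AdjAvoid (T.base h)) (T.base (T.pair h)) (T.base x)) := by
  constructor
  · rintro (rfl | ⟨hph, _, hr⟩)
    · exact absurd rfl hb
    · exact ⟨hph, hr⟩
  · rintro ⟨hph, hr⟩
    exact Or.inr ⟨hph, fun e => hb (by rw [e]), hr⟩

lemma inSide_congr_base {h x y : T.H} (hxy : T.base x = T.base y)
    (hb : T.base x ≠ T.base h) : (T.InSide h x ↔ T.InSide h y) := by
  rw [T.inSide_iff_of_base_ne hb, T.inSide_iff_of_base_ne (hxy ▸ hb), hxy]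

lemma inSide_pair_iff (hT : T.IsStableTree) {h k : T.H} (hk : T.pair k ≠ k) :
    (T.InSide h k ↔ T.InSide h (T.pair k)) := by
  by_cases hph : T.pair h = h
  · -- h is a leg; both sides are false
    have hkh : k ≠ h := fun e => hk (by rw [e, hph])
    have hpkh : T.pair k ≠ h := by
      intro e
      exact hkh (by rw [← T.pair_invol k, e, hph])
    constructor
    · rintro (rfl | ⟨hph', _, _⟩)
      · exact absurd rfl hkh
      · exact absurd hph hph'
    · rintro (e | ⟨hph', _, _⟩)
      · exact absurd e hpkh
      · exact absurd hph hph'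
  · by_cases hkh : k = h
    · subst hkh
      constructor
      · intro _; exact T.inSide_pair_self hph
      · intro _; exact T.inSide_self k
    · by_cases hkph : k = T.pair h
      · subst hkph
        rw [T.pair_invol]
        exact ⟨fun _ => T.inSide_self h, fun _ => T.inSide_pair_self hph⟩
      · have hpkh : T.pair k ≠ h := by
          intro e
          exact hkph (by rw [← T.pair_invol k, e])
      -- now the edge {k, pair k} is distinct from the edge {h, pair h}
        by_cases hbk : T.base k = T.base h
        · -- k based at v : both sides false
          constructor
          · intro hin
            exact absurd hin (T.not_inSide_base hT hkh hbk)
          · rintro (e | ⟨hph', _, hr⟩)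
            · exact absurd e hpkh
            · exact absurd hr (T.sep ⟨hT.1, hT.2⟩ hph hk rfl hbk (fun e => hkh e.symm))
        · by_cases hbpk : T.base (T.pair k) = T.base h
          · constructor
            · rintro (e | ⟨hph', _, hr⟩)
              · exact absurd e hkh
              · refine absurd hr ?_
                have := T.sep ⟨hT.1, hT.2⟩ hph (by rw [T.pair_invol]; exact fun e => hk e.symm)
                  rfl hbpk (fun e => hpkh e.symm)
                rwa [T.pair_invol] at this
            · intro hin
              exact absurd hin (T.not_inSide_base hT hpkh hbpk)
          · -- both endpoints away from v : transfer along the edge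
            rw [T.inSide_iff_of_base_ne hbk, T.inSide_iff_of_base_ne hbpk]
            constructor
            · rintro ⟨hph', hr⟩
              exact ⟨hph', hr.tail ⟨hbk, hbpk, k, hk, rfl, rfl⟩⟩
            · rintro ⟨hph', hr⟩
              refine ⟨hph', hr.tail ⟨hbpk, hbk, T.pair k, ?_, rfl, ?_⟩⟩
              · rw [T.pair_invol]; exact fun e => hk e.symm
              · rw [T.pair_invol]


lemma reach_lift {u w a b : T.V} (hr : Relation.ReflTransGen (T.AdjAvoid w) a b)
    (hu : ∀ z, Relation.ReflTransGen (T.AdjAvoid w) a z → z ≠ u) :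
    Relation.ReflTransGen (T.AdjAvoid u) a b := by
  induction hr with
  | refl => exact Relation.ReflTransGen.refl
  | @tail c e hac hadj ih =>
    exact Relation.ReflTransGen.tail ih
      ⟨hu c hac, hu e (hac.tail hadj), hadj.2.2⟩

end BMarkedGraph

end InSideAux

section ClosureAux

open Relation

namespace BMarkedGraph

variable {B : Type} (T : BMarkedGraph B)

lemma far_lt (hT : T.IsStableTree) {k x : T.H} (hk : T.pair k ≠ k) (hx : T.pair x ≠ x)
    (hbx : T.base x = T.base (T.pair k)) (hxpk : x ≠ T.pair k) :
    (Finset.univ.filter fun y => T.InSide x y).card <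
      (Finset.univ.filter fun y => T.InSide k y).card := by
  classical
  have hwu : T.base (T.pair k) ≠ T.base k := hT.1 k hk
  have hsep := T.sep hT (h := T.pair k) (k := x)
    (by rw [T.pair_invol]; exact fun e => hk e.symm) hx rfl hbx (fun e => hxpk e.symm)
  rw [T.pair_invol] at hsep
  have N1 : ∀ z, Relation.ReflTransGen (T.AdjAvoid (T.base (T.pair k))) (T.base (T.pair x)) z →
      z ≠ T.base k := by
    intro z hz e
    subst e
    exact hsep (by haveI : Std.Symm (T.AdjAvoid (T.base (T.pair k))) := ⟨fun _ _ hh => T.adjAvoid_symm _ hh⟩; exact Std.Symm.symm _ _ hz)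
  have kNotFar : ¬ T.InSide x k := by
    rintro (e | ⟨_, _, hr⟩)
    · rw [← e] at hbx
      exact hwu hbx.symm
    · rw [hbx] at hr
      exact N1 _ hr rfl
  have hxk : x ≠ k := by
    intro e
    rw [e] at hbx
    exact hwu hbx.symm
  have hsubset : (Finset.univ.filter fun y => T.InSide x y) ⊆
      (Finset.univ.filter fun y => T.InSide k y) := by
    intro y hy
    rw [Finset.mem_filter] at hy ⊢
    refine ⟨Finset.mem_univ _, ?_⟩
    rcases hy.2 with rfl | ⟨_, hyx, hr⟩
    · exact Or.inr ⟨hk, hxk, by rw [hbx]⟩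
    · rw [hbx] at hr
      have hyk : y ≠ k := by
        intro e
        rw [e] at hr
        exact N1 _ hr rfl
      refine Or.inr ⟨hk, hyk, ?_⟩
      refine Relation.ReflTransGen.head
        ⟨hwu, N1 _ Relation.ReflTransGen.refl, x, hx, hbx, rfl⟩ ?_
      exact T.reach_lift hr (fun z hz => N1 z hz)
  have hss : (Finset.univ.filter fun y => T.InSide x y) ⊂
      (Finset.univ.filter fun y => T.InSide k y) := by
    refine ⟨hsubset, fun hcon => kNotFar ?_⟩
    have := hcon (Finset.mem_filter.2 ⟨Finset.mem_univ k, T.inSide_self k⟩)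
    exact (Finset.mem_filter.1 this).2
  exact Finset.card_lt_card hss

lemma base_pow (ord0 : Equiv.Perm T.H) (h1 : ∀ x, T.base (ord0 x) = T.base x)
    (n : ℕ) (x : T.H) : T.base ((ord0 ^ n) x) = T.base x := by
  induction n with
  | zero => rfl
  | succ n ih =>
    rw [pow_succ', Equiv.Perm.mul_apply, h1 _, ih]

lemma mon_mem_closure {d : ℕ} (hT : T.IsStableTree) (ord0 : Equiv.Perm T.H)
    (mon0 : T.H → Equiv.Perm (Fin d))
    (h1 : ∀ x, T.base (ord0 x) = T.base x)
    (h3 : ∀ x n, (ord0 ^ n) x = x → prodAlong ord0 mon0 x n = 1)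
    (h4 : ∀ x, T.pair x ≠ x → mon0 (T.pair x) = (mon0 x)⁻¹) :
    ∀ k, mon0 k ∈ Subgroup.closure (Set.range fun b => mon0 (T.leg b)) := by
  classical
  set K := Subgroup.closure (Set.range fun b => mon0 (T.leg b)) with hK
  suffices hS : ∀ n k, (Finset.univ.filter fun y => T.InSide k y).card ≤ n → mon0 k ∈ K by
    exact fun k => hS _ k le_rfl
  intro n
  induction n using Nat.strong_induction_on with
  | _ n ih =>
    intro k hkn
    by_cases hpk : T.pair k = k
    · obtain ⟨b, hb⟩ := T.leg_of_fixed k hpk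
      rw [← hb]
      exact Subgroup.subset_closure ⟨b, rfl⟩
    · set s := T.pair k with hs
      set L := Function.minimalPeriod (⇑ord0) s with hL
      have hper := perm_isPeriodic ord0 s
      have hLpos : 0 < L := Function.IsPeriodicPt.minimalPeriod_pos hper.2 hper.1
      have hLs : (ord0 ^ L) s = s := by
        have h' := Function.isPeriodicPt_minimalPeriod (⇑ord0) s
        unfold Function.IsPeriodicPt Function.IsFixedPt at h'
        rw [Equiv.Perm.iterate_eq_pow] at h'
        rw [hL]
        exact h'
      have hprod : prodAlong ord0 mon0 s L = 1 := h3 s L hLs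
      obtain ⟨m, hm⟩ : ∃ m, L = m + 1 := ⟨L - 1, by omega⟩
      have hpeel : prodAlong ord0 mon0 s L = prodAlong ord0 mon0 (ord0 s) m * mon0 s := by
        rw [hm]; rfl
      have hmonk : prodAlong ord0 mon0 (ord0 s) m = mon0 k := by
        have h4k : mon0 s = (mon0 k)⁻¹ := h4 k hpk
        rw [hpeel, h4k] at hprod
        have := congrArg (· * mon0 k) hprod
        simpa [mul_assoc] using this
      rw [← hmonk]
      apply prodAlong_mem
      intro j hj
      have hx : (ord0 ^ j) (ord0 s) = (ord0 ^ (j + 1)) s := by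
        rw [pow_succ]; simp [Equiv.Perm.mul_apply]
      rw [hx]
      set x := (ord0 ^ (j + 1)) s with hxdef
      by_cases hpx : T.pair x = x
      · obtain ⟨b, hb⟩ := T.leg_of_fixed x hpx
        rw [← hb]
        exact Subgroup.subset_closure ⟨b, rfl⟩
      · have hbx : T.base x = T.base (T.pair k) := T.base_pow ord0 h1 (j+1) s
        have hxs : x ≠ s := by
          intro e
          have hper' : Function.IsPeriodicPt (⇑ord0) (j+1) s := by
            unfold Function.IsPeriodicPt Function.IsFixedPt
            rw [Equiv.Perm.iterate_eq_pow]
            exact e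
          have := Nat.le_of_dvd (by omega) (Function.IsPeriodicPt.minimalPeriod_dvd hper')
          omega
        have hlt := T.far_lt hT hpk hpx hbx hxs
        exact ih _ (lt_of_lt_of_le hlt hkn) x le_rfl

end BMarkedGraph

end ClosureAux

section CondCAux

namespace BMarkedGraph

variable {B : Type} (T : BMarkedGraph B)

lemma ord_ne (ord0 : Equiv.Perm T.H)
    (h2 : ∀ x y, T.base x = T.base y → ∃ n, (ord0 ^ n) x = y)
    (hval : ∀ v, 3 ≤ Fintype.card {x : T.H // T.base x = v}) :
    ∀ x, ord0 x ≠ x := by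
  intro x hfix
  have hiter : ∀ n, (ord0 ^ n) x = x := by
    intro n
    induction n with
    | zero => rfl
    | succ n ih => rw [pow_succ', Equiv.Perm.mul_apply, ih, hfix]
  have hall : ∀ y : {y : T.H // T.base y = T.base x}, y = ⟨x, rfl⟩ := by
    rintro ⟨y, hy⟩
    obtain ⟨n, hn⟩ := h2 x y hy.symm
    rw [hiter n] at hn
    exact Subtype.ext hn.symm
  have h3 := hval (T.base x)
  have hle : Fintype.card {y : T.H // T.base y = T.base x} ≤ 1 :=
    Fintype.card_le_one_iff.2 (fun a b => (hall a).trans (hall b).symm)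
  omega

lemma prodAlong_modified {d : ℕ} (ord0 : Equiv.Perm T.H)
    (mon0 mtil : T.H → Equiv.Perm (Fin d))
    (h1 : ∀ x, T.base (ord0 x) = T.base x)
    (h2 : ∀ x y, T.base x = T.base y → ∃ n, (ord0 ^ n) x = y)
    (h3 : ∀ x n, (ord0 ^ n) x = x → prodAlong ord0 mon0 x n = 1)
    (hval : ∀ v, 3 ≤ Fintype.card {x : T.H // T.base x = v})
    (s : T.H)
    (Ha : ∀ x, T.base x = T.base s → x ≠ s → x ≠ ord0 s → mtil x = mon0 x)
    (Hb : mtil (ord0 s) * mtil s = mon0 (ord0 s) * mon0 s)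
    (Hc : ∀ x, T.base x ≠ T.base s →
      ∃ c, ∀ y, T.base y = T.base x → mtil y = c * mon0 y * c⁻¹) :
    ∀ k n, (ord0 ^ n) k = k → prodAlong ord0 mtil k n = 1 := by
  have h2step : ∀ (mm : T.H → Equiv.Perm (Fin d)) (z : T.H),
      prodAlong ord0 mm z 2 = mm (ord0 z) * mm z := by
    intro mm z
    show (1 * mm (ord0 z)) * mm z = _
    rw [one_mul]
  intro k n hkn
  by_cases hbk : T.base k = T.base s
  · -- the special vertex
    rcases Nat.eq_zero_or_pos n with rfl | hn
    · rfl
    set L := Function.minimalPeriod (⇑ord0) k with hLdef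
    have hper := perm_isPeriodic ord0 k
    have hLpos : 0 < L := Function.IsPeriodicPt.minimalPeriod_pos hper.2 hper.1
    have hLk : (ord0 ^ L) k = k := by
      have h' := Function.isPeriodicPt_minimalPeriod (⇑ord0) k
      unfold Function.IsPeriodicPt Function.IsFixedPt at h'
      rw [Equiv.Perm.iterate_eq_pow] at h'
      rw [hLdef]
      exact h'
    have hdvd : L ∣ n := by
      refine Function.IsPeriodicPt.minimalPeriod_dvd ?_
      unfold Function.IsPeriodicPt Function.IsFixedPt
      rw [Equiv.Perm.iterate_eq_pow]
      exact hkn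
    obtain ⟨q, hq⟩ := hdvd
    rw [hq, mul_comm, prodAlong_pow ord0 mtil k L q hLk]
    suffices hone : prodAlong ord0 mtil k L = 1 by rw [hone, one_pow]
    obtain ⟨m, hm⟩ := h2 s k hbk.symm
    have hLs0 : Function.minimalPeriod (⇑ord0) s = L := by
      rw [hLdef, ← hm]
      exact (perm_orbit_minimalPeriod ord0 m s).symm
    have hLs : (ord0 ^ L) s = s := by
      have h' := Function.isPeriodicPt_minimalPeriod (⇑ord0) s
      unfold Function.IsPeriodicPt Function.IsFixedPt at h'
      rw [Equiv.Perm.iterate_eq_pow, hLs0] at h'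
      exact h'
    rw [← hm, prodAlong_conj_base ord0 mtil s m L hLs]
    suffices hP : prodAlong ord0 mtil s L = 1 by rw [hP]; group
    have hL1 : ord0 s ≠ s := T.ord_ne ord0 h2 hval s
    have hL2 : 2 ≤ L := by
      by_contra hcon
      push_neg at hcon
      have hL1' : L = 1 := by omega
      rw [hL1', pow_one] at hLs
      exact hL1 hLs
    obtain ⟨r, hr⟩ : ∃ r, L = 2 + r := ⟨L - 2, by omega⟩
    have hdvd_ne : ∀ j, 0 < j → j < L → (ord0 ^ j) s ≠ s := by
      intro j hj0 hjL e
      have hper' : Function.IsPeriodicPt (⇑ord0) j s := by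
        unfold Function.IsPeriodicPt Function.IsFixedPt
        rw [Equiv.Perm.iterate_eq_pow]
        exact e
      have hdv := hper'.minimalPeriod_dvd
      rw [hLs0] at hdv
      have := Nat.le_of_dvd hj0 hdv
      omega
    have htail : prodAlong ord0 mtil ((ord0 ^ 2) s) r =
        prodAlong ord0 mon0 ((ord0 ^ 2) s) r := by
      apply prodAlong_congr
      intro j hj
      have hpt : (ord0 ^ j) ((ord0 ^ 2) s) = (ord0 ^ (j + 2)) s := by
        rw [pow_add]
        simp [Equiv.Perm.mul_apply]
      rw [hpt]
      apply Ha
      · exact T.base_pow ord0 h1 (j+2) s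
      · exact hdvd_ne (j+2) (by omega) (by omega)
      · intro e
        have e2 : (ord0 ^ (j + 1)) s = s := by
          have : ord0 ((ord0 ^ (j+1)) s) = ord0 s := by
            rw [← Equiv.Perm.mul_apply, ← pow_succ']
            exact e
          exact ord0.injective this
        exact hdvd_ne (j+1) (by omega) (by omega) e2
    have hhead : prodAlong ord0 mtil s 2 = prodAlong ord0 mon0 s 2 := by
      rw [h2step, h2step, Hb]
    calc prodAlong ord0 mtil s L
        = prodAlong ord0 mtil ((ord0 ^ 2) s) r * prodAlong ord0 mtil s 2 := by
          rw [hr, prodAlong_add]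
      _ = prodAlong ord0 mon0 ((ord0 ^ 2) s) r * prodAlong ord0 mon0 s 2 := by
          rw [htail, hhead]
      _ = prodAlong ord0 mon0 s L := by rw [hr, prodAlong_add]
      _ = 1 := h3 s L hLs
  · -- other vertices : uniform conjugation
    obtain ⟨c, hc⟩ := Hc k hbk
    have : prodAlong ord0 mtil k n = prodAlong ord0 (fun y => c * mon0 y * c⁻¹) k n := by
      apply prodAlong_congr
      intro j hj
      exact hc _ (T.base_pow ord0 h1 j k)
    rw [this, prodAlong_conj, h3 k n hkn]
    group

end BMarkedGraph

end CondCAux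

/-- The common shape of the two braid moves. -/
noncomputable def movedDec (P : Portrait B A) (T : BMarkedGraph B) (D : PreDecoration P T)
    (h s : T.H) (c : Equiv.Perm (Fin P.d)) : PreDecoration P T where
  ord := Equiv.swap s (D.ord s) * D.ord * (Equiv.swap s (D.ord s))⁻¹
  mon := fun k => if T.InSide h k then c * D.mon k * c⁻¹ else D.mon k
  cyc := fun a => if T.InSide h (T.leg (P.phi a)) then c (D.cyc a) else D.cyc a

theorem isDecoration_moved (P : Portrait B A) (T : BMarkedGraph B) (hT : T.IsStableTree)
    (D : PreDecoration P T) (hD : IsDecoration P T D) (h s : T.H)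
    (c : Equiv.Perm (Fin P.d))
    (hhs : h = s ∨ h = D.ord s)
    (hKey : (movedDec P T D h s c).mon s * (movedDec P T D h s c).mon (D.ord s) =
      D.mon (D.ord s) * D.mon s)
    (hcK : ∃ k0, (movedDec P T D h s c).mon k0 = c ∨ (movedDec P T D h s c).mon k0 = c⁻¹) :
    IsDecoration P T (movedDec P T D h s c) := by
  obtain ⟨hD1, hD2, hD3, hD4, hD5, hD6, hD7, hD8⟩ := hD
  set σ := Equiv.swap s (D.ord s) with hσ
  set D' := movedDec P T D h s c with hD'def
  have hordeq : D'.ord = σ * D.ord * σ⁻¹ := rfl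
  have hmoneq : ∀ k, D'.mon k = if T.InSide h k then c * D.mon k * c⁻¹ else D.mon k :=
    fun _ => rfl
  have hcyceq : ∀ a, D'.cyc a =
      if T.InSide h (T.leg (P.phi a)) then c (D.cyc a) else D.cyc a := fun _ => rfl
  have hval := hT.2.2.2
  have hbs : T.base s = T.base h := by
    rcases hhs with rfl | rfl
    · rfl
    · exact (hD1 s).symm
  have hσbase : ∀ x, T.base (σ x) = T.base x := by
    intro x
    rcases eq_or_ne x s with rfl | hx1
    · rw [hσ, Equiv.swap_apply_left]
      exact hD1 x
    rcases eq_or_ne x (D.ord s) with rfl | hx2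
    · rw [hσ, Equiv.swap_apply_right]
      exact (hD1 s).symm
    · rw [hσ, Equiv.swap_apply_of_ne_of_ne hx1 hx2]
  have hσinv : σ⁻¹ = σ := by rw [hσ, Equiv.swap_inv]
  have hσσ : ∀ x, σ (σ x) = x := by
    intro x
    rw [hσ, Equiv.swap_apply_self]
  have hord' : ∀ x, D'.ord x = σ (D.ord (σ x)) := by
    intro x
    rw [hordeq, hσinv]
    simp [Equiv.Perm.mul_apply]
  have hpow' : ∀ (n : ℕ) (x : T.H), (D'.ord ^ n) x = σ ((D.ord ^ n) (σ x)) := by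
    intro n x
    rw [hordeq, conj_pow, hσinv]
    simp [Equiv.Perm.mul_apply]
  have hordne : ∀ x, D.ord x ≠ x := T.ord_ne D.ord hD2 hval
  -- h is not a fixed point issue: basic facts about the region
  have hnotin : ∀ x, T.base x = T.base s → x ≠ s → x ≠ D.ord s → ¬ T.InSide h x := by
    intro x hbx hx1 hx2
    refine T.not_inSide_base hT ?_ (by rw [hbx, hbs])
    rcases hhs with rfl | rfl
    · exact hx1
    · exact hx2
  -- condition (i) vertices
  have c1 : ∀ k, T.base (D'.ord k) = T.base k := by
    intro k
    rw [hord', hσbase, hD1, hσbase]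
  have c2 : ∀ x y, T.base x = T.base y → ∃ n : ℕ, (D'.ord ^ n) x = y := by
    intro x y hxy
    obtain ⟨n, hn⟩ := hD2 (σ x) (σ y) (by rw [hσbase, hσbase]; exact hxy)
    exact ⟨n, by rw [hpow', hn, hσσ]⟩
  have c3 : ∀ k (n : ℕ), (D'.ord ^ n) k = k → prodAlong D'.ord D'.mon k n = 1 := by
    intro k n hkn
    have hrel : prodAlong D'.ord D'.mon k n =
        prodAlong D.ord (fun x => D'.mon (σ x)) (σ⁻¹ k) n := by
      rw [hordeq]
      exact prodAlong_relabel σ D.ord D'.mon k n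
    rw [hrel]
    have hfix : (D.ord ^ n) (σ⁻¹ k) = σ⁻¹ k := by
      rw [hσinv]
      have h' := hpow' n k
      rw [hkn] at h'
      have h'' := congrArg σ h'
      rw [hσσ] at h''
      exact h''.symm
    refine T.prodAlong_modified D.ord D.mon (fun x => D'.mon (σ x)) hD1 hD2 hD3 hval s
      ?_ ?_ ?_ (σ⁻¹ k) n hfix
    · intro x hbx hx1 hx2
      show D'.mon (σ x) = D.mon x
      have hσx : σ x = x := by rw [hσ, Equiv.swap_apply_of_ne_of_ne hx1 hx2]
      rw [hσx, hmoneq, if_neg (hnotin x hbx hx1 hx2)]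
    · show D'.mon (σ (D.ord s)) * D'.mon (σ s) = D.mon (D.ord s) * D.mon s
      have e1 : σ (D.ord s) = s := by rw [hσ, Equiv.swap_apply_right]
      have e2 : σ s = D.ord s := by rw [hσ, Equiv.swap_apply_left]
      rw [e1, e2]
      exact hKey
    · intro x hbx
      refine ⟨if T.InSide h x then c else 1, ?_⟩
      intro y hby
      show D'.mon (σ y) = (if T.InSide h x then c else 1) * D.mon y *
        (if T.InSide h x then c else 1)⁻¹
      have hy1 : y ≠ s := by
        intro e
        rw [e] at hby
        exact hbx hby.symm
      have hy2 : y ≠ D.ord s := by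
        intro e
        rw [e] at hby
        rw [hD1 s] at hby
        exact hbx hby.symm
      have hσy : σ y = y := by rw [hσ, Equiv.swap_apply_of_ne_of_ne hy1 hy2]
      have hbyh : T.base y ≠ T.base h := by
        rw [hby]
        exact fun e => hbx (e.trans hbs.symm)
      have hiff : T.InSide h y ↔ T.InSide h x := T.inSide_congr_base hby hbyh
      rw [hσy, hmoneq]
      by_cases hin : T.InSide h x
      · rw [if_pos hin, if_pos (hiff.2 hin)]
      · rw [if_neg hin, if_neg (fun hc => hin (hiff.1 hc)), one_mul, inv_one, mul_one]
  have c4 : ∀ k, T.pair k ≠ k → D'.mon (T.pair k) = (D'.mon k)⁻¹ := by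
    intro k hk
    have hiff := T.inSide_pair_iff hT (h := h) hk
    rw [hmoneq, hmoneq]
    by_cases hin : T.InSide h k
    · rw [if_pos hin, if_pos (hiff.1 hin), hD4 k hk]
      group
    · rw [if_neg hin, if_neg (fun hc => hin (hiff.2 hc)), hD4 k hk]
  have c5 : ∀ b, (Equiv.Perm.partition (D'.mon (T.leg b))).parts = P.br b := by
    intro b
    rw [hmoneq]
    by_cases hin : T.InSide h (T.leg b)
    · rw [if_pos hin]
      have hconj : IsConj (D.mon (T.leg b)) (c * D.mon (T.leg b) * c⁻¹) :=
        isConj_iff.2 ⟨c, rfl⟩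
      rw [← Equiv.Perm.partition_eq_of_isConj.1 hconj]
      exact hD5 b
    · rw [if_neg hin]
      exact hD5 b
  have c6 : ∀ a a', P.phi a = P.phi a' →
      (D'.mon (T.leg (P.phi a))).SameCycle (D'.cyc a) (D'.cyc a') → a = a' := by
    intro a a' hphi hsame
    refine hD6 a a' hphi ?_
    rw [hmoneq, hcyceq, hcyceq, ← hphi] at hsame
    by_cases hin : T.InSide h (T.leg (P.phi a))
    · rw [if_pos hin, if_pos hin, if_pos hin] at hsame
      have := Equiv.Perm.sameCycle_conj.1 hsame
      simpa using this
    · rwa [if_neg hin, if_neg hin, if_neg hin] at hsame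
  have c7 : ∀ a, Function.minimalPeriod (⇑(D'.mon (T.leg (P.phi a)))) (D'.cyc a) = P.rm a := by
    intro a
    rw [hmoneq, hcyceq]
    by_cases hin : T.InSide h (T.leg (P.phi a))
    · rw [if_pos hin, if_pos hin, permConj_minimalPeriod]
      exact hD7 a
    · rw [if_neg hin, if_neg hin]
      exact hD7 a
  have c8 : ∀ i j : Fin P.d, ∃ π ∈ Subgroup.closure (Set.range fun b => D'.mon (T.leg b)),
      π i = j := by
    intro i j
    obtain ⟨π, hπ, hπij⟩ := hD8 i j
    set K' := Subgroup.closure (Set.range fun b => D'.mon (T.leg b)) with hK'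
    have hmon' : ∀ k, D'.mon k ∈ K' := T.mon_mem_closure hT D'.ord D'.mon c1 c3 c4
    have hcc : c ∈ K' := by
      obtain ⟨k0, hk0 | hk0⟩ := hcK
      · rw [← hk0]
        exact hmon' k0
      · have : c = (D'.mon k0)⁻¹ := by rw [hk0, inv_inv]
        rw [this]
        exact inv_mem (hmon' k0)
    have hKK' : ∀ b, D.mon (T.leg b) ∈ K' := by
      intro b
      by_cases hin : T.InSide h (T.leg b)
      · have : D.mon (T.leg b) = c⁻¹ * (D'.mon (T.leg b)) * c := by
          rw [hmoneq, if_pos hin]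
          group
        rw [this]
        exact mul_mem (mul_mem (inv_mem hcc) (Subgroup.subset_closure ⟨b, rfl⟩)) hcc
      · have : D.mon (T.leg b) = D'.mon (T.leg b) := by rw [hmoneq, if_neg hin]
        rw [this]
        exact Subgroup.subset_closure ⟨b, rfl⟩
    have hle : Subgroup.closure (Set.range fun b => D.mon (T.leg b)) ≤ K' := by
      rw [Subgroup.closure_le]
      rintro _ ⟨b, rfl⟩
      exact hKK' b
    exact ⟨π, hle hπ, hπij⟩
  exact ⟨c1, c2, c3, c4, c5, c6, c7, c8⟩

/-- Braid moves (anticlockwise and clockwise) take `P`-decorations of a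
`B`-marked stable tree to `P`-decorations. -/
theorem isDecoration_braid (P : Portrait B A) (T : BMarkedGraph B)
    (hT : T.IsStableTree) (D : PreDecoration P T) (hD : IsDecoration P T D) (h : T.H) :
    IsDecoration P T (braidACW D h) ∧ IsDecoration P T (braidCW D h) := by
  have hval := hT.2.2.2
  have hordne : ∀ x, D.ord x ≠ x := T.ord_ne D.ord hD.2.1 hval
  constructor
  · -- anticlockwise
    have e1 : braidACW D h = movedDec P T D h h (D.mon (D.ord h)) := rfl
    rw [e1]
    have hnotin2 : ¬ T.InSide h (D.ord h) :=
      T.not_inSide_base hT (hordne h) (hD.1 h)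
    refine isDecoration_moved P T hT D hD h h (D.mon (D.ord h)) (Or.inl rfl) ?_ ?_
    · show (if T.InSide h h then _ else _) * (if T.InSide h (D.ord h) then
        D.mon (D.ord h) * D.mon (D.ord h) * (D.mon (D.ord h))⁻¹ else D.mon (D.ord h)) = _
      rw [if_pos (T.inSide_self h), if_neg hnotin2]
      group
    · refine ⟨D.ord h, Or.inl ?_⟩
      show (if T.InSide h (D.ord h) then _ else D.mon (D.ord h)) = D.mon (D.ord h)
      rw [if_neg hnotin2]
  · -- clockwise
    set s := D.ord⁻¹ h with hs
    have hos : D.ord s = h := D.ord.apply_symm_apply h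
    have hsh : s ≠ h := by
      intro e
      exact hordne s (by rw [hos, e])
    have hbsh : T.base s = T.base h := by
      rw [← hos]
      exact (hD.1 s).symm
    have hnotin1 : ¬ T.InSide h s := T.not_inSide_base hT hsh hbsh
    have e2 : braidCW D h = movedDec P T D h s ((D.mon s)⁻¹) := by
      unfold braidCW movedDec
      have hswap : Equiv.swap h (D.ord⁻¹ h) = Equiv.swap s (D.ord s) := by
        rw [hos, ← hs, Equiv.swap_comm]
      congr 1
      rw [hswap]
    rw [e2]
    refine isDecoration_moved P T hT D hD h s ((D.mon s)⁻¹) (Or.inr hos.symm) ?_ ?_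
    · show (if T.InSide h s then _ else D.mon s) *
        (if T.InSide h (D.ord s) then (D.mon s)⁻¹ * D.mon (D.ord s) * ((D.mon s)⁻¹)⁻¹
          else D.mon (D.ord s)) = D.mon (D.ord s) * D.mon s
      rw [if_neg hnotin1, if_pos (by rw [hos]; exact T.inSide_self h)]
      group
    · refine ⟨s, Or.inr ?_⟩
      show (if T.InSide h s then _ else D.mon s) = ((D.mon s)⁻¹)⁻¹
      rw [if_neg hnotin1, inv_inv]
end
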